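/- arXiv:1806.01060 — 3 statements merged into one kernel-verified Lean document; each statement's English description precedes it below -/
import Mathlib

section
/- For fixed a ≥ 0 and all real b with |b| ≥ 1, the modulus of the Gamma function satisfies |Γ(a+bi)| ≍ |b|^{a-1/2} exp(-π|b|/2), i.e., there exist constants c, C > 0 (depending only on a) such that c·|b|^{a-1/2}·exp(-π|b|/2) ≤ |Γ(a+bi)| ≤ C·|b|^{a-1/2}·exp(-π|b|/2) for all |b| ≥ 1. -/
open Complex Real

open Set Filter MeasureTheory

lemma arctan_le_self' {t : ℝ} (ht : 0 ≤ t) : Real.arctan t ≤ t := by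
  rcases eq_or_lt_of_le ht with h | h
  · simp [← h]
  · have h1 : 0 < Real.arctan t := by
      rw [← Real.arctan_zero]; exact Real.arctan_strictMono h
    have h2 := Real.lt_tan h1 (Real.arctan_lt_pi_div_two t)
    rw [Real.tan_arctan] at h2
    linarith

lemma arg_eq_arctan' {x y : ℝ} (hx : 0 < x) : Complex.arg (x + y * Complex.I) = Real.arctan (y / x) := by
  have hre : (↑x + ↑y * Complex.I).re = x := by simp
  have him : (↑x + ↑y * Complex.I).im = y := by simp
  have h1 : |Complex.arg (↑x + ↑y * Complex.I)| ≤ π / 2 :=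
    Complex.abs_arg_le_pi_div_two_iff.2 (by rw [hre]; exact hx.le)
  have h2 : Complex.arg (↑x + ↑y * Complex.I) ≠ π / 2 := by
    intro h; have := Complex.arg_eq_pi_div_two_iff.1 h; rw [hre] at this; linarith [this.1]
  have h3 : Complex.arg (↑x + ↑y * Complex.I) ≠ -(π / 2) := by
    intro h; have := Complex.arg_eq_neg_pi_div_two_iff.1 h; rw [hre] at this; linarith [this.1]
  have h4 := Complex.tan_arg (↑x + ↑y * Complex.I)
  rw [hre, him] at h4
  rw [← h4, Real.arctan_tan]
  · cases' (abs_le.1 h1).1.lt_or_eq with h h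
    · exact h
    · exact absurd h.symm h3
  · cases' (abs_le.1 h1).2.lt_or_eq with h h
    · exact h
    · exact absurd h h2

/-- upper bound on y * arg(x+yi) for re ≥ 0 -/
lemma mul_arg_le {x y : ℝ} (hx : 0 ≤ x) : y * Complex.arg (x + y * Complex.I) ≤ π * |y| / 2 := by
  have h1 : |Complex.arg (↑x + ↑y * Complex.I)| ≤ π / 2 :=
    Complex.abs_arg_le_pi_div_two_iff.2 (by simpa using hx)
  calc y * Complex.arg (↑x + ↑y * Complex.I) ≤ |y * Complex.arg (↑x + ↑y * Complex.I)| := le_abs_self _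
    _ = |y| * |Complex.arg (↑x + ↑y * Complex.I)| := abs_mul _ _
    _ ≤ |y| * (π / 2) := by gcongr
    _ = π * |y| / 2 := by ring

/-- lower bound on y * arg(x+yi) for re > 0 -/
lemma le_mul_arg {x y : ℝ} (hx : 0 < x) : π * |y| / 2 - x ≤ y * Complex.arg (x + y * Complex.I) := by
  rcases eq_or_ne y 0 with rfl | hy
  · simp [Complex.arg_ofReal_of_nonneg hx.le]; positivity
  · have habs : 0 < |y| := abs_pos.2 hy
    have key : y * Complex.arg (↑x + ↑y * Complex.I) = |y| * Real.arctan (|y| / x) := by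
      rw [arg_eq_arctan' hx]
      rcases abs_cases y with ⟨h1, h2⟩ | ⟨h1, h2⟩
      · rw [h1]
      · rw [h1, show -y / x = -(y/x) by ring, Real.arctan_neg]; ring
    rw [key]
    have h2 : Real.arctan (x / |y|) = π / 2 - Real.arctan (|y| / x) := by
      have := Real.arctan_inv_of_pos (show 0 < |y| / x by positivity)
      rwa [show (|y| / x)⁻¹ = x / |y| by field_simp] at this
    have h3 : Real.arctan (x / |y|) ≤ x / |y| := arctan_le_self' (by positivity)
    have h4 : Real.arctan (|y| / x) = π / 2 - Real.arctan (x / |y|) := by linarith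
    rw [h4]
    have : |y| * Real.arctan (x / |y|) ≤ x := by
      calc |y| * Real.arctan (x / |y|) ≤ |y| * (x / |y|) := by gcongr
        _ = x := by field_simp
    nlinarith

/-- |Γ(1/2+bi)|² = π / cosh (π b) -/
lemma Gamma_half_sq (b : ℝ) :
    ‖Complex.Gamma (1/2 + b * Complex.I)‖ ^ 2 = π / Real.cosh (π * b) := by
  set z : ℂ := 1/2 + b * Complex.I with hz
  have hconj : (starRingEnd ℂ) z = 1 - z := by
    rw [hz]; apply Complex.ext <;> simp <;> norm_num
  have h1 : Complex.Gamma z * Complex.Gamma (1 - z) = ↑π / Complex.sin (↑π * z) :=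
    Complex.Gamma_mul_Gamma_one_sub z
  have h2 : ‖Complex.Gamma (1 - z)‖ = ‖Complex.Gamma z‖ := by
    rw [← hconj, Complex.Gamma_conj]; simp
  have hsin : Complex.sin (↑π * z) = ↑(Real.cosh (π * b)) := by
    have : (↑π : ℂ) * z = ↑π / 2 + (↑π * ↑b) * Complex.I := by rw [hz]; ring
    rw [this, Complex.sin_add, Complex.sin_pi_div_two, Complex.cos_pi_div_two,
      Complex.cos_mul_I, Complex.ofReal_cosh, Complex.ofReal_mul]
    ring
  have := congrArg (‖·‖) h1
  simp only [norm_mul] at this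
  rw [h2, hsin] at this
  rw [sq, this, norm_div]
  simp only [Complex.norm_real, Real.norm_eq_abs,
    abs_of_pos Real.pi_pos, abs_of_pos (Real.cosh_pos (x := π * b))]

lemma abs_Gamma_le' {s : ℂ} (hs : 0 < s.re) : ‖Complex.Gamma s‖ ≤ Real.Gamma s.re := by
  rw [Complex.Gamma_eq_integral hs, Real.Gamma_eq_integral hs, Complex.GammaIntegral]
  refine le_trans (MeasureTheory.norm_integral_le_integral_norm _) (le_of_eq ?_)
  refine MeasureTheory.setIntegral_congr_fun measurableSet_Ioi fun x hx => ?_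
  have hx' : (0:ℝ) < x := hx
  rw [norm_mul, Complex.norm_real, Real.norm_eq_abs, abs_of_pos (Real.exp_pos _),
    Complex.norm_cpow_eq_rpow_re_of_pos hx']
  simp [Complex.sub_re]

lemma abs_sin_le' (w : ℂ) : ‖Complex.sin w‖ ≤ Real.exp |w.im| := by
  rw [Complex.sin]
  calc ‖(Complex.exp (-w * Complex.I) - Complex.exp (w * Complex.I)) * Complex.I / 2‖
      = ‖Complex.exp (-w * Complex.I) - Complex.exp (w * Complex.I)‖ / 2 := by
        simp [norm_div, norm_mul]
    _ ≤ (‖Complex.exp (-w * Complex.I)‖ + ‖Complex.exp (w * Complex.I)‖) / 2 := by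
        gcongr; exact norm_sub_le _ _
    _ = (Real.exp w.im + Real.exp (-w.im)) / 2 := by
        rw [Complex.norm_exp, Complex.norm_exp]
        simp [Complex.mul_I_re]
    _ ≤ Real.exp |w.im| := by
        have h1 : Real.exp w.im ≤ Real.exp |w.im| := Real.exp_le_exp.2 (le_abs_self _)
        have h2 : Real.exp (-w.im) ≤ Real.exp |w.im| := Real.exp_le_exp.2 (neg_le_abs _)
        linarith

lemma exp_abs_le_two_cosh (x : ℝ) : Real.exp |x| ≤ 2 * Real.cosh x := by
  rw [Real.cosh_eq]
  rcases abs_cases x with ⟨h1, _⟩ | ⟨h1, _⟩ <;> rw [h1] <;>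
    nlinarith [Real.exp_pos x, Real.exp_pos (-x)]
lemma Gamma_half_norm_le (b : ℝ) : ‖Complex.Gamma (1/2 + b * Complex.I)‖ ≤
    Real.sqrt (2*π) * Real.exp (-(π * |b|)/2) := by
  have h1 := Gamma_half_sq b
  have hc := exp_abs_le_two_cosh (π*b)
  have habs : |π * b| = π * |b| := by rw [abs_mul, abs_of_pos Real.pi_pos]
  rw [habs] at hc
  have h2 : π / Real.cosh (π*b) ≤ 2*π * Real.exp (-(π*|b|)) := by
    rw [div_le_iff₀ (Real.cosh_pos (π*b))]
    have e1 : Real.exp (-(π*|b|)) * Real.exp (π*|b|) = 1 := by rw [← Real.exp_add]; simp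
    have h3 := mul_le_mul_of_nonneg_left hc
      (by positivity : (0:ℝ) ≤ π * Real.exp (-(π*|b|)))
    rw [mul_assoc, e1, mul_one] at h3
    linarith
  have hR : (Real.sqrt (2*π) * Real.exp (-(π * |b|)/2))^2 = 2*π * Real.exp (-(π*|b|)) := by
    rw [mul_pow, Real.sq_sqrt (by positivity), ← Real.exp_nat_mul]
    ring_nf
  have hsq : ‖Complex.Gamma (1/2 + b * Complex.I)‖^2 ≤
      (Real.sqrt (2*π) * Real.exp (-(π * |b|)/2))^2 := by
    rw [h1, hR]; exact h2
  calc ‖Complex.Gamma (1/2 + b * Complex.I)‖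
      = Real.sqrt (‖Complex.Gamma (1/2 + b * Complex.I)‖^2) := (Real.sqrt_sq (norm_nonneg _)).symm
    _ ≤ Real.sqrt ((Real.sqrt (2*π) * Real.exp (-(π * |b|)/2))^2) := Real.sqrt_le_sqrt hsq
    _ = _ := Real.sqrt_sq (by positivity)

noncomputable def Gfun (w : ℂ) : ℂ := Complex.exp (w - (w - 1/2) * Complex.log w)
noncomputable def Ffun (w : ℂ) : ℂ := Complex.Gamma w * Gfun w

lemma norm_Gfun (w : ℂ) : ‖Gfun w‖ =
    Real.exp (w.re - ((w.re - 1/2) * Real.log (‖w‖) - w.im * Complex.arg w)) := by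
  rw [Gfun, Complex.norm_exp]
  congr 1
  simp [Complex.sub_re, Complex.mul_re, Complex.log_re, Complex.log_im, Complex.sub_im]

lemma norm_Ffun (x y : ℝ) : ‖Ffun (x + y * Complex.I)‖ = ‖Complex.Gamma (x + y * Complex.I)‖ *
    Real.exp (x - (x - 1/2) * Real.log (‖x + y * Complex.I‖)
      + y * Complex.arg (x + y * Complex.I)) := by
  rw [Ffun, norm_mul, norm_Gfun]
  congr 2
  simp
  ring
lemma F_bound_left (z : ℂ) (hz : z.re = 1/2) :
    ‖Ffun z‖ ≤ Real.sqrt (2*π) * Real.exp (3/2) := by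
  have hzeq : z = ((1/2 : ℝ) : ℂ) + (z.im : ℝ) * Complex.I := by
    rw [← Complex.re_add_im z, hz]; norm_num
  set y := z.im with hy
  rw [hzeq, norm_Ffun]
  have harg := mul_arg_le (x := (1/2:ℝ)) (y := y) (by norm_num)
  have hg : ‖Complex.Gamma (((1/2:ℝ):ℂ) + y * Complex.I)‖ ≤
      Real.sqrt (2*π) * Real.exp (-(π * |y|)/2) := by
    have := Gamma_half_norm_le y
    norm_num at this ⊢
    exact this
  calc ‖Complex.Gamma (((1/2:ℝ):ℂ) + y * Complex.I)‖ *
        Real.exp ((1/2:ℝ) - ((1/2:ℝ) - 1/2) * Real.log (‖((1/2:ℝ):ℂ) + y * Complex.I‖)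
          + y * Complex.arg (((1/2:ℝ):ℂ) + y * Complex.I))
      ≤ (Real.sqrt (2*π) * Real.exp (-(π * |y|)/2)) * Real.exp (1/2 + π * |y| / 2) := by
        apply mul_le_mul hg (Real.exp_le_exp.2 (by norm_num at harg ⊢; linarith)) (Real.exp_pos _).le
          (by positivity)
    _ = Real.sqrt (2*π) * Real.exp (1/2) := by
        rw [mul_assoc, ← Real.exp_add]; ring_nf
    _ ≤ Real.sqrt (2*π) * Real.exp (3/2) := by gcongr <;> norm_num

lemma F_bound_right (z : ℂ) (hz : z.re = 3/2) :
    ‖Ffun z‖ ≤ Real.sqrt (2*π) * Real.exp (3/2) := by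
  have hzeq : z = ((3/2 : ℝ) : ℂ) + (z.im : ℝ) * Complex.I := by
    rw [← Complex.re_add_im z, hz]; norm_num
  set y := z.im with hy
  rw [hzeq, norm_Ffun]
  have harg := mul_arg_le (x := (3/2:ℝ)) (y := y) (by norm_num)
  have hne : ((1/2:ℝ):ℂ) + y * Complex.I ≠ 0 := by
    intro h
    have := congrArg Complex.re h
    simp at this
  have hGrec : Complex.Gamma (((3/2:ℝ):ℂ) + y * Complex.I) =
      (((1/2:ℝ):ℂ) + y * Complex.I) * Complex.Gamma (((1/2:ℝ):ℂ) + y * Complex.I) := by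
    rw [← Complex.Gamma_add_one _ hne]
    congr 1
    push_cast
    ring
  have hg : ‖Complex.Gamma (((1/2:ℝ):ℂ) + y * Complex.I)‖ ≤
      Real.sqrt (2*π) * Real.exp (-(π * |y|)/2) := by
    have := Gamma_half_norm_le y
    norm_num at this ⊢
    exact this
  have habs_le : ‖((1/2:ℝ):ℂ) + y * Complex.I‖ ≤
      ‖((3/2:ℝ):ℂ) + y * Complex.I‖ := by
    rw [Complex.norm_def, Complex.norm_def]
    apply Real.sqrt_le_sqrt
    simp [Complex.normSq_apply]
    nlinarith
  have habspos : (0:ℝ) < ‖((3/2:ℝ):ℂ) + y * Complex.I‖ := by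
    apply norm_pos_iff.2
    intro h
    have := congrArg Complex.re h
    simp at this
  have hexplog : Real.exp ((3/2:ℝ) - ((3/2:ℝ) - 1/2) * Real.log (‖((3/2:ℝ):ℂ) + y * Complex.I‖)
          + y * Complex.arg (((3/2:ℝ):ℂ) + y * Complex.I))
      ≤ Real.exp (3/2 + π * |y| / 2) / ‖((3/2:ℝ):ℂ) + y * Complex.I‖ := by
    rw [show ((3/2:ℝ) - 1/2) = 1 by norm_num, one_mul]
    conv_rhs => rw [← Real.exp_log habspos]
    rw [← Real.exp_sub]
    exact Real.exp_le_exp.2 (by linarith)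
  rw [hGrec, norm_mul]
  calc ‖((1/2:ℝ):ℂ) + ↑y * Complex.I‖ * ‖Complex.Gamma (((1/2:ℝ):ℂ) + y * Complex.I)‖ *
        Real.exp ((3/2:ℝ) - ((3/2:ℝ) - 1/2) * Real.log (‖((3/2:ℝ):ℂ) + y * Complex.I‖)
          + y * Complex.arg (((3/2:ℝ):ℂ) + y * Complex.I))
      ≤ ‖((3/2:ℝ):ℂ) + y * Complex.I‖ * (Real.sqrt (2*π) * Real.exp (-(π * |y|)/2)) *
          (Real.exp (3/2 + π * |y| / 2) / ‖((3/2:ℝ):ℂ) + y * Complex.I‖) := by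
        apply mul_le_mul _ hexplog (Real.exp_pos _).le (by positivity)
        exact mul_le_mul habs_le hg (norm_nonneg _) (norm_nonneg _)
    _ = (Real.sqrt (2*π) * Real.exp (-(π * |y|)/2)) * Real.exp (3/2 + π * |y| / 2) *
          (‖((3/2:ℝ):ℂ) + y * Complex.I‖ / ‖((3/2:ℝ):ℂ) + y * Complex.I‖) := by
        ring
    _ = Real.sqrt (2*π) * Real.exp (3/2) := by
        rw [div_self habspos.ne', mul_one, mul_assoc, ← Real.exp_add]; ring_nf
lemma Ffun_diffAt {z : ℂ} (hz : 0 < z.re) : DifferentiableAt ℂ Ffun z := by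
  apply DifferentiableAt.mul
  · apply Complex.differentiableAt_Gamma
    intro m h
    have : z.re = -(m:ℝ) := by rw [h]; simp
    have : (0:ℝ) ≤ (m:ℝ) := Nat.cast_nonneg m
    linarith [hz.trans_eq ‹z.re = -(m:ℝ)›]
  · apply DifferentiableAt.cexp
    apply DifferentiableAt.sub differentiableAt_id
    exact (differentiableAt_id.sub (differentiableAt_const _)).mul
      (Complex.differentiableAt_log (Complex.mem_slitPlane_iff.2 (Or.inl hz)))

lemma Ffun_diffContOnCl : DiffContOnCl ℂ Ffun (Complex.re ⁻¹' Ioo (1/2 : ℝ) (3/2)) := by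
  apply DifferentiableOn.diffContOnCl
  intro z hz
  have hsub : closure (Complex.re ⁻¹' Ioo (1/2 : ℝ) (3/2)) ⊆
      Complex.re ⁻¹' closure (Ioo (1/2 : ℝ) (3/2)) :=
    Continuous.closure_preimage_subset Complex.continuous_re _
  have hz2 := hsub hz
  rw [closure_Ioo (by norm_num : (1/2:ℝ) ≠ 3/2)] at hz2
  exact (Ffun_diffAt (by linarith [hz2.1] : 0 < z.re)).differentiableWithinAt

lemma Gamma_re_bounded : ∃ M : ℝ, 1 ≤ M ∧ ∀ t ∈ Icc (1/2:ℝ) (3/2), Real.Gamma t ≤ M := by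
  have hcont : ContinuousOn Real.Gamma (Icc (1/2:ℝ) (3/2)) := by
    intro t ht
    apply ContinuousAt.continuousWithinAt
    apply (Real.differentiableAt_Gamma _).continuousAt
    intro m h
    have : (0:ℝ) ≤ (m:ℝ) := Nat.cast_nonneg m
    have ht1 := ht.1
    rw [h] at ht1
    linarith
  obtain ⟨M, hM⟩ := isCompact_Icc.exists_bound_of_continuousOn hcont
  refine ⟨max M 1, le_max_right _ _, fun t ht => ?_⟩
  exact le_trans (le_trans (le_abs_self _) (hM t ht)) (le_max_left _ _)

lemma Ffun_interior_bound' {M : ℝ} (hM : 1 ≤ M)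
    (hMb : ∀ t ∈ Icc (1/2:ℝ) (3/2), Real.Gamma t ≤ M) (x y : ℝ)
    (hx1 : 1/2 ≤ x) (hx2 : x ≤ 3/2) :
    ‖Ffun (x + y * Complex.I)‖ ≤ M * Real.exp (3/2 + Real.log 2 + π * |y| / 2) := by
  rw [norm_Ffun]
  have hre : ((x:ℂ) + y * Complex.I).re = x := by simp
  have hGle : ‖Complex.Gamma ((x:ℂ) + y * Complex.I)‖ ≤ M := by
    refine le_trans (abs_Gamma_le' ?_) ?_
    · rw [hre]; linarith
    · rw [hre]; exact hMb x ⟨hx1, hx2⟩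
  have harg := mul_arg_le (x := x) (y := y) (by linarith)
  have hA : (1/2:ℝ) ≤ ‖(x:ℂ) + y * Complex.I‖ := by
    calc (1/2:ℝ) ≤ x := hx1
      _ ≤ |x| := le_abs_self _
      _ = |((x:ℂ) + y * Complex.I).re| := by rw [hre]
      _ ≤ ‖(x:ℂ) + y * Complex.I‖ := Complex.abs_re_le_norm _
  have hlogA : -Real.log 2 ≤ Real.log (‖(x:ℂ) + y * Complex.I‖) := by
    have := Real.log_le_log (by norm_num : (0:ℝ) < 1/2) hA
    rwa [show (1/2:ℝ) = 2⁻¹ by norm_num, Real.log_inv] at this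
  have hlog2 : (0:ℝ) ≤ Real.log 2 := Real.log_nonneg (by norm_num)
  have hs0 : (0:ℝ) ≤ x - 1/2 := by linarith
  have hs1 : x - 1/2 ≤ 1 := by linarith
  have hE : x - (x - 1/2) * Real.log (‖(x:ℂ) + y * Complex.I‖)
      + y * Complex.arg ((x:ℂ) + y * Complex.I) ≤ 3/2 + Real.log 2 + π * |y| / 2 := by
    have m1 := mul_le_mul_of_nonneg_left hlogA hs0
    have m2 := mul_le_mul_of_nonneg_right hs1 hlog2
    nlinarith
  calc ‖Complex.Gamma ((x:ℂ) + y * Complex.I)‖ *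
        Real.exp (x - (x - 1/2) * Real.log (‖(x:ℂ) + y * Complex.I‖)
          + y * Complex.arg ((x:ℂ) + y * Complex.I))
      ≤ M * Real.exp (3/2 + Real.log 2 + π * |y| / 2) :=
        mul_le_mul hGle (Real.exp_le_exp.2 hE) (Real.exp_pos _).le (by linarith)

lemma Ffun_interior_bound {M : ℝ} (hM : 1 ≤ M)
    (hMb : ∀ t ∈ Icc (1/2:ℝ) (3/2), Real.Gamma t ≤ M) {z : ℂ}
    (hz1 : 1/2 ≤ z.re) (hz2 : z.re ≤ 3/2) :
    ‖Ffun z‖ ≤ M * Real.exp (3/2 + Real.log 2 + π * |z.im| / 2) := by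
  have hzeq : z = (z.re : ℝ) + (z.im : ℝ) * Complex.I := (Complex.re_add_im z).symm
  conv_lhs => rw [hzeq]
  exact Ffun_interior_bound' hM hMb z.re z.im hz1 hz2

lemma strip_bound (z : ℂ) (hz1 : 1/2 ≤ z.re) (hz2 : z.re ≤ 3/2) :
    ‖Ffun z‖ ≤ Real.sqrt (2*π) * Real.exp (3/2) := by
  obtain ⟨M, hM1, hMb⟩ := Gamma_re_bounded
  set B : ℝ := max 0 (Real.log M + Real.log 2 + 3/2) + π with hB
  apply PhragmenLindelof.vertical_strip Ffun_diffContOnCl ?_ F_bound_left F_bound_right hz1 hz2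
  refine ⟨1, by rw [show (3/2:ℝ) - 1/2 = 1 by norm_num, div_one]; linarith [Real.pi_gt_three], B, ?_⟩
  rw [Asymptotics.isBigO_iff]
  refine ⟨1, ?_⟩
  rw [Filter.eventually_inf_principal]
  apply Filter.Eventually.of_forall
  intro w hw
  simp only [Set.mem_preimage, Set.mem_Ioo] at hw
  have h1 := Ffun_interior_bound hM1 hMb hw.1.le hw.2.le
  have hMpos : (0:ℝ) < M := by linarith
  have h2 : M * Real.exp (3/2 + Real.log 2 + π * |w.im| / 2) =
      Real.exp (Real.log M + Real.log 2 + 3/2 + π * |w.im| / 2) := by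
    conv_lhs => rw [← Real.exp_log hMpos]
    rw [← Real.exp_add]
    congr 1
    ring
  have h3 : Real.log M + Real.log 2 + 3/2 + π * |w.im| / 2 ≤ B * Real.exp (1 * |w.im|) := by
    have e1 : (1:ℝ) ≤ Real.exp (1 * |w.im|) := by
      rw [one_mul]; exact Real.one_le_exp (abs_nonneg _)
    have e2 : |w.im| ≤ Real.exp (1 * |w.im|) := by
      rw [one_mul]; linarith [Real.add_one_le_exp |w.im|]
    have e3 : Real.log M + Real.log 2 + 3/2 ≤ max 0 (Real.log M + Real.log 2 + 3/2) :=
      le_max_right _ _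
    have e4 : (0:ℝ) ≤ max 0 (Real.log M + Real.log 2 + 3/2) := le_max_left _ _
    have e5 : max 0 (Real.log M + Real.log 2 + 3/2) * 1 ≤
        max 0 (Real.log M + Real.log 2 + 3/2) * Real.exp (1 * |w.im|) := by
      apply mul_le_mul_of_nonneg_left e1 e4
    have e6 : π * |w.im| ≤ π * Real.exp (1 * |w.im|) :=
      mul_le_mul_of_nonneg_left e2 Real.pi_pos.le
    rw [hB, add_mul]
    nlinarith [Real.pi_pos]
  calc ‖Ffun w‖ ≤ M * Real.exp (3/2 + Real.log 2 + π * |w.im| / 2) := h1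
    _ = Real.exp (Real.log M + Real.log 2 + 3/2 + π * |w.im| / 2) := h2
    _ ≤ Real.exp (B * Real.exp (1 * |w.im|)) := Real.exp_le_exp.2 h3
    _ ≤ 1 * ‖Real.exp (B * Real.exp (1 * |w.im|))‖ := by
        simp
lemma strip_Gamma_upper (x y : ℝ) (hx1 : 1/2 ≤ x) (hx2 : x ≤ 3/2) (hy : 1 ≤ |y|) :
    ‖Complex.Gamma ((x:ℂ) + y * Complex.I)‖ ≤
      (2 * Real.sqrt (2*π) * Real.exp (3/2)) * |y| ^ (x - 1/2) * Real.exp (-(π*|y|)/2) := by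
  have hF := strip_bound ((x:ℂ) + y * Complex.I) (by simp; linarith) (by simp; linarith)
  rw [norm_Ffun] at hF
  set A := ‖(x:ℂ) + y * Complex.I‖ with hA
  have hypos : (0:ℝ) < |y| := by linarith
  have hApos : (0:ℝ) < A := by
    rw [hA]
    apply norm_pos_iff.2
    intro h
    have := congrArg Complex.re h
    simp at this
    linarith
  have hAle : A ≤ 2 * |y| := by
    have hsq : A^2 ≤ (2*|y|)^2 := by
      rw [hA, Complex.sq_norm]
      simp [Complex.normSq_apply]
      nlinarith [_root_.sq_abs y, abs_nonneg y]
    calc A = Real.sqrt (A^2) := (Real.sqrt_sq hApos.le).symm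
      _ ≤ Real.sqrt ((2*|y|)^2) := Real.sqrt_le_sqrt hsq
      _ = 2*|y| := Real.sqrt_sq (by positivity)
  have hlogA : Real.log A ≤ Real.log 2 + Real.log |y| := by
    rw [← Real.log_mul (by norm_num) hypos.ne']
    exact Real.log_le_log hApos hAle
  have hlogy : (0:ℝ) ≤ Real.log |y| := Real.log_nonneg hy
  have hlog2 : (0:ℝ) ≤ Real.log 2 := Real.log_nonneg (by norm_num)
  have hs0 : (0:ℝ) ≤ x - 1/2 := by linarith
  have hs1 : x - 1/2 ≤ 1 := by linarith
  have harg := le_mul_arg (x := x) (y := y) (by linarith)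
  have hnegE : -(x - (x - 1/2) * Real.log A + y * Complex.arg ((x:ℂ) + y * Complex.I)) ≤
      (x - 1/2) * Real.log |y| + Real.log 2 - π * |y| / 2 := by
    have m1 := mul_le_mul_of_nonneg_left hlogA hs0
    have m2 := mul_le_mul_of_nonneg_right hs1 hlog2
    nlinarith
  have hdiv : ‖Complex.Gamma ((x:ℂ) + y * Complex.I)‖ ≤
      (Real.sqrt (2*π) * Real.exp (3/2)) *
        Real.exp (-(x - (x - 1/2) * Real.log A + y * Complex.arg ((x:ℂ) + y * Complex.I))) := by
    have hEpos := Real.exp_pos (x - (x - 1/2) * Real.log A +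
      y * Complex.arg ((x:ℂ) + y * Complex.I))
    rw [Real.exp_neg, mul_comm (Real.sqrt (2*π) * Real.exp (3/2)), ← div_eq_inv_mul,
      le_div_iff₀ hEpos]
    exact hF
  refine le_trans hdiv ?_
  have hexp : Real.exp (-(x - (x - 1/2) * Real.log A +
        y * Complex.arg ((x:ℂ) + y * Complex.I))) ≤
      2 * |y| ^ (x - 1/2) * Real.exp (-(π*|y|)/2) := by
    calc Real.exp (-(x - (x - 1/2) * Real.log A + y * Complex.arg ((x:ℂ) + y * Complex.I)))
        ≤ Real.exp ((x - 1/2) * Real.log |y| + Real.log 2 - π * |y| / 2) := Real.exp_le_exp.2 hnegE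
      _ = Real.exp ((x - 1/2) * Real.log |y|) * Real.exp (Real.log 2) * Real.exp (-(π * |y|)/2) := by
          rw [← Real.exp_add, ← Real.exp_add]
          congr 1
          ring
      _ = 2 * |y| ^ (x - 1/2) * Real.exp (-(π*|y|)/2) := by
          rw [Real.exp_log (by norm_num : (0:ℝ) < 2), Real.rpow_def_of_pos hypos]
          ring_nf
  calc (Real.sqrt (2*π) * Real.exp (3/2)) *
        Real.exp (-(x - (x - 1/2) * Real.log A + y * Complex.arg ((x:ℂ) + y * Complex.I)))
      ≤ (Real.sqrt (2*π) * Real.exp (3/2)) * (2 * |y| ^ (x - 1/2) * Real.exp (-(π*|y|)/2)) :=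
        mul_le_mul_of_nonneg_left hexp (by positivity)
    _ = (2 * Real.sqrt (2*π) * Real.exp (3/2)) * |y| ^ (x - 1/2) * Real.exp (-(π*|y|)/2) := by
        ring
def GUpper (a C : ℝ) : Prop := ∀ b : ℝ, 1 ≤ |b| →
  ‖Complex.Gamma ((a:ℂ) + b * Complex.I)‖ ≤ C * |b| ^ (a - 1/2) * Real.exp (-(π * |b|) / 2)

def GLower (a c : ℝ) : Prop := ∀ b : ℝ, 1 ≤ |b| →
  c * |b| ^ (a - 1/2) * Real.exp (-(π * |b|) / 2) ≤ ‖Complex.Gamma ((a:ℂ) + b * Complex.I)‖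

lemma hb_ne {b : ℝ} (hb : 1 ≤ |b|) : b ≠ 0 := by
  intro h; rw [h] at hb; simp at hb; linarith

lemma z_ne (a : ℝ) {b : ℝ} (hb : 1 ≤ |b|) : (a:ℂ) + b * Complex.I ≠ 0 := by
  intro h
  exact hb_ne hb (by simpa using congrArg Complex.im h)

lemma Grec (a : ℝ) {b : ℝ} (hb : 1 ≤ |b|) :
    Complex.Gamma (((a+1:ℝ):ℂ) + b * Complex.I) =
      ((a:ℂ) + b * Complex.I) * Complex.Gamma ((a:ℂ) + b * Complex.I) := by
  rw [← Complex.Gamma_add_one _ (z_ne a hb)]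
  congr 1
  push_cast
  ring

lemma abs_z_ge (a b : ℝ) : |b| ≤ ‖(a:ℂ) + b * Complex.I‖ := by
  have := Complex.abs_im_le_norm ((a:ℂ) + b * Complex.I)
  simpa using this

lemma abs_z_le (a b : ℝ) : ‖(a:ℂ) + b * Complex.I‖ ≤ |a| + |b| := by
  have := Complex.norm_le_abs_re_add_abs_im ((a:ℂ) + b * Complex.I)
  simpa using this

lemma rpow_shift {b : ℝ} (hb : 1 ≤ |b|) (t : ℝ) : |b| ^ (t + 1) = |b| ^ t * |b| := by
  rw [Real.rpow_add (by linarith : (0:ℝ) < |b|), Real.rpow_one]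

lemma upper_rec (n : ℕ) : ∀ a : ℝ, 0 ≤ a → a ≤ n + 3/2 → ∃ C, 0 < C ∧ GUpper a C := by
  induction n with
  | zero =>
    intro a ha0 ha1
    norm_num at ha1
    by_cases hc : 1/2 ≤ a
    · exact ⟨2 * Real.sqrt (2*π) * Real.exp (3/2), by positivity,
        fun b hb => strip_Gamma_upper a b hc ha1 hb⟩
    · push_neg at hc
      refine ⟨2 * Real.sqrt (2*π) * Real.exp (3/2), by positivity, fun b hb => ?_⟩
      have hbpos : (0:ℝ) < |b| := by linarith
      have hup := strip_Gamma_upper (a+1) b (by linarith) (by linarith) hb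
      rw [Grec a hb, norm_mul] at hup
      have hzb := abs_z_ge a b
      have hΓ : (0:ℝ) ≤ ‖Complex.Gamma ((a:ℂ) + b * Complex.I)‖ := norm_nonneg _
      have h1 : ‖Complex.Gamma ((a:ℂ) + b * Complex.I)‖ * |b| ≤
          (2 * Real.sqrt (2*π) * Real.exp (3/2)) * |b| ^ (a + 1 - 1/2) *
            Real.exp (-(π*|b|)/2) := by
        calc ‖Complex.Gamma ((a:ℂ) + b * Complex.I)‖ * |b|
            ≤ ‖((a:ℂ) + b * Complex.I)‖ * ‖Complex.Gamma ((a:ℂ) + b * Complex.I)‖ := by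
              rw [mul_comm]
              exact mul_le_mul_of_nonneg_right (by simpa using hzb) hΓ
          _ ≤ _ := hup
      have hshift : |b| ^ (a + 1 - 1/2) = |b| ^ (a - 1/2) * |b| := by
        rw [show a + 1 - 1/2 = (a - 1/2) + 1 by ring, rpow_shift hb]
      rw [hshift] at h1
      have := (mul_le_mul_iff_of_pos_right hbpos).1 (by linarith [h1] :
        ‖Complex.Gamma ((a:ℂ) + b * Complex.I)‖ * |b| ≤
          ((2 * Real.sqrt (2*π) * Real.exp (3/2)) * |b| ^ (a - 1/2) *
            Real.exp (-(π*|b|)/2)) * |b|)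
      exact this
  | succ n ih =>
    intro a ha0 ha1
    by_cases hc : a ≤ n + 3/2
    · exact ih a ha0 hc
    · push_neg at hc
      have hn : (0:ℝ) ≤ (n:ℝ) := Nat.cast_nonneg n
      obtain ⟨C, hC, hU⟩ := ih (a-1) (by linarith) (by push_cast at ha1 ⊢; linarith)
      refine ⟨(|a| + 1) * C, by positivity, fun b hb => ?_⟩
      have hbpos : (0:ℝ) < |b| := by linarith
      have hrec : Complex.Gamma ((a:ℂ) + b * Complex.I) =
          (((a-1:ℝ):ℂ) + b * Complex.I) * Complex.Gamma (((a-1:ℝ):ℂ) + b * Complex.I) := by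
        have := Grec (a-1) hb
        rw [show ((a-1)+1 : ℝ) = a by ring] at this
        exact this
      rw [hrec, norm_mul]
      have hz_le := abs_z_le (a-1) b
      have hU' := hU b hb
      have hzC : ‖(((a-1:ℝ):ℂ) + b * Complex.I)‖ ≤ (|a| + 1) * |b| := by
        have ha' : |a| = a := abs_of_pos (by linarith)
        have ha1' : |a - 1| = a - 1 := abs_of_pos (by linarith)
        calc ‖(((a-1:ℝ):ℂ) + b * Complex.I)‖ ≤ |a-1| + |b| := by
              simpa using hz_le
          _ ≤ (|a| + 1) * |b| := by nlinarith
      have hshift : |b| ^ (a - 1/2) = |b| ^ (a - 1 - 1/2) * |b| := by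
        rw [show a - 1/2 = (a - 1 - 1/2) + 1 by ring, rpow_shift hb]
      calc ‖(((a-1:ℝ):ℂ) + b * Complex.I)‖ * ‖Complex.Gamma (((a-1:ℝ):ℂ) + b * Complex.I)‖
          ≤ ((|a| + 1) * |b|) * (C * |b| ^ (a - 1 - 1/2) * Real.exp (-(π * |b|) / 2)) :=
            mul_le_mul hzC hU' (norm_nonneg _) (by positivity)
        _ = (|a| + 1) * C * |b| ^ (a - 1/2) * Real.exp (-(π * |b|) / 2) := by
            rw [hshift]
            ring
lemma lower_base : ∀ a : ℝ, 0 ≤ a → a ≤ 1 → ∃ c, 0 < c ∧ GLower a c := by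
  intro a ha0 ha1
  obtain ⟨C, hC, hU⟩ := upper_rec 0 (1-a) (by linarith) (by push_cast; linarith)
  refine ⟨π / C, by positivity, fun b hb => ?_⟩
  have hbpos : (0:ℝ) < |b| := by linarith
  have hb0 : b ≠ 0 := hb_ne hb
  set z : ℂ := (a:ℂ) + b * Complex.I with hz
  have h1 : Complex.Gamma z * Complex.Gamma (1 - z) = ↑π / Complex.sin (↑π * z) :=
    Complex.Gamma_mul_Gamma_one_sub z
  have hsin_ne : Complex.sin (↑π * z) ≠ 0 := by
    intro h
    obtain ⟨k, hk⟩ := Complex.sin_eq_zero_iff.1 h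
    have him := congrArg Complex.im hk
    simp [hz, Complex.mul_im] at him
    exact hb0 him
  have key : Complex.Gamma z * Complex.Gamma (1 - z) * Complex.sin (↑π * z) = ↑π := by
    rw [h1]
    field_simp
  have keyn : ‖Complex.Gamma z‖ * ‖Complex.Gamma (1 - z)‖ * ‖Complex.sin (↑π * z)‖ = π := by
    have := congrArg (‖·‖) key
    simpa [norm_mul, Complex.norm_real, abs_of_pos Real.pi_pos] using this
  have hconj : ‖Complex.Gamma (1 - z)‖ = ‖Complex.Gamma (((1-a:ℝ):ℂ) + b * Complex.I)‖ := by
    have he : (1:ℂ) - z = (starRingEnd ℂ) (((1-a:ℝ):ℂ) + b * Complex.I) := by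
      rw [hz]
      apply Complex.ext <;> simp
    rw [he, Complex.Gamma_conj]
    simp
  have hB1 : ‖Complex.Gamma (1 - z)‖ ≤ C * |b| ^ (1 - a - 1/2) * Real.exp (-(π * |b|) / 2) := by
    rw [hconj]
    exact hU b hb
  have hB2 : ‖Complex.sin (↑π * z)‖ ≤ Real.exp (π * |b|) := by
    have := abs_sin_le' (↑π * z)
    have him : (↑π * z).im = π * b := by simp [hz, Complex.mul_im]
    rwa [him, abs_mul, abs_of_pos Real.pi_pos] at this
  have hΓ2pos : 0 < ‖Complex.Gamma (1 - z)‖ := by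
    rcases eq_or_lt_of_le (norm_nonneg (Complex.Gamma (1 - z))) with h | h
    · exfalso
      rw [← h] at keyn
      simp at keyn
      linarith [Real.pi_pos, keyn]
    · exact h
  have hsinpos : 0 < ‖Complex.sin (↑π * z)‖ := norm_pos_iff.2 hsin_ne
  have hπle : π ≤ ‖Complex.Gamma z‖ *
      ((C * |b| ^ (1 - a - 1/2) * Real.exp (-(π * |b|) / 2)) * Real.exp (π * |b|)) := by
    calc π = ‖Complex.Gamma z‖ * (‖Complex.Gamma (1 - z)‖ * ‖Complex.sin (↑π * z)‖) := by
          conv_lhs => rw [← keyn]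
          ring
      _ ≤ _ := mul_le_mul_of_nonneg_left
          (mul_le_mul hB1 hB2 hsinpos.le (by positivity)) (norm_nonneg _)
  have hDpos : (0:ℝ) < (C * |b| ^ (1 - a - 1/2) * Real.exp (-(π * |b|) / 2)) *
      Real.exp (π * |b|) := by positivity
  have hfinal : π / ((C * |b| ^ (1 - a - 1/2) * Real.exp (-(π * |b|) / 2)) * Real.exp (π * |b|))
      ≤ ‖Complex.Gamma z‖ := by
    rw [div_le_iff₀ hDpos]
    linarith [hπle]
  refine le_trans (le_of_eq ?_) hfinal
  have hr : (0:ℝ) < |b| ^ (a - 1/2) := Real.rpow_pos_of_pos hbpos _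
  have hrn : |b| ^ (1 - a - 1/2) = (|b| ^ (a - 1/2))⁻¹ := by
    rw [show (1 - a - 1/2 : ℝ) = -(a - 1/2) by ring, Real.rpow_neg hbpos.le]
  have hEe : Real.exp (-(π * |b|) / 2) * Real.exp (π * |b|) * Real.exp (-(π * |b|) / 2) = 1 := by
    rw [← Real.exp_add, ← Real.exp_add,
      show -(π * |b|) / 2 + π * |b| + -(π * |b|) / 2 = 0 by ring, Real.exp_zero]
  rw [hrn, eq_div_iff (by positivity :
    ((C * (|b| ^ (a - 1/2))⁻¹ * Real.exp (-(π * |b|) / 2)) * Real.exp (π * |b|)) ≠ 0)]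
  calc π / C * |b| ^ (a - 1/2) * Real.exp (-(π * |b|) / 2) *
        (C * (|b| ^ (a - 1/2))⁻¹ * Real.exp (-(π * |b|) / 2) * Real.exp (π * |b|))
      = π * (C / C) * (|b| ^ (a - 1/2) * (|b| ^ (a - 1/2))⁻¹) *
          (Real.exp (-(π * |b|) / 2) * Real.exp (π * |b|) * Real.exp (-(π * |b|) / 2)) := by
        ring
    _ = π := by
        rw [div_self hC.ne', mul_inv_cancel₀ hr.ne', hEe, mul_one, mul_one, mul_one]

lemma lower_rec (n : ℕ) : ∀ a : ℝ, 0 ≤ a → a ≤ n + 1 → ∃ c, 0 < c ∧ GLower a c := by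
  induction n with
  | zero => intro a ha0 ha1; exact lower_base a ha0 (by simpa using ha1)
  | succ n ih =>
    intro a ha0 ha1
    by_cases hc : a ≤ n + 1
    · exact ih a ha0 hc
    · push_neg at hc
      have hn : (0:ℝ) ≤ (n:ℝ) := Nat.cast_nonneg n
      obtain ⟨c, hcpos, hL⟩ := ih (a-1) (by linarith) (by push_cast at ha1 ⊢; linarith)
      refine ⟨c, hcpos, fun b hb => ?_⟩
      have hbpos : (0:ℝ) < |b| := by linarith
      have hrec : Complex.Gamma ((a:ℂ) + b * Complex.I) =
          (((a-1:ℝ):ℂ) + b * Complex.I) * Complex.Gamma (((a-1:ℝ):ℂ) + b * Complex.I) := by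
        have := Grec (a-1) hb
        rw [show ((a-1)+1 : ℝ) = a by ring] at this
        exact this
      rw [hrec, norm_mul]
      have hzb : |b| ≤ ‖(((a-1:ℝ):ℂ) + b * Complex.I)‖ := by
        simpa using abs_z_ge (a-1) b
      have hL' := hL b hb
      have hshift : |b| ^ (a - 1/2) = |b| ^ (a - 1 - 1/2) * |b| := by
        rw [show a - 1/2 = (a - 1 - 1/2) + 1 by ring, rpow_shift hb]
      calc c * |b| ^ (a - 1/2) * Real.exp (-(π * |b|) / 2)
          = |b| * (c * |b| ^ (a - 1 - 1/2) * Real.exp (-(π * |b|) / 2)) := by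
            rw [hshift]; ring
        _ ≤ ‖(((a-1:ℝ):ℂ) + b * Complex.I)‖ * ‖Complex.Gamma (((a-1:ℝ):ℂ) + b * Complex.I)‖ :=
            mul_le_mul hzb hL' (by positivity) (norm_nonneg _)

theorem gamma_asymptotics (a : ℝ) (ha : 0 ≤ a) :
    ∃ c C : ℝ, 0 < c ∧ 0 < C ∧ ∀ b : ℝ, 1 ≤ |b| →
      c * |b| ^ (a - 1/2) * Real.exp (-(π * |b|) / 2) ≤ ‖Complex.Gamma (a + b * Complex.I)‖ ∧
      ‖Complex.Gamma (a + b * Complex.I)‖ ≤ C * |b| ^ (a - 1/2) * Real.exp (-(π * |b|) / 2) := by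
  obtain ⟨C, hC, hU⟩ := upper_rec ⌈a⌉₊ a ha
    (by linarith [Nat.le_ceil a])
  obtain ⟨c, hc, hL⟩ := lower_rec ⌈a⌉₊ a ha
    (by linarith [Nat.le_ceil a])
  exact ⟨c, C, hc, hC, fun b hb => ⟨hL b hb, hU b hb⟩⟩
end

section
/- Let α > -1 and consider X = (0,∞) with measure dν(x) = x^α dx. Then there exists C > 0 such that for all x ∈ X, r > 0, and γ > 0: ν(B(x,γr)) ≤ C(1+γ)^d ν(B(x,r)), where d = max(1, α+1) and B(x,r) = {y ∈ (0,∞) : |x-y| < r}. -/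
open Real MeasureTheory

/-- Two-sided bound for `(x+r)^β - (max (x-r) 0)^β`. -/
lemma bessel_G_bounds (β x r : ℝ) (hβ : 0 < β) (hx : 0 < x) (hr : 0 < r) :
    min 1 β * (r * (x + r) ^ (β - 1)) ≤ (x + r) ^ β - (max (x - r) 0) ^ β ∧
      (x + r) ^ β - (max (x - r) 0) ^ β ≤ (2 * max 1 β) * (r * (x + r) ^ (β - 1)) := by
  set a := x + r with ha_def
  set b := max (x - r) 0 with hb_def
  have ha : 0 < a := by positivity
  have hb0 : 0 ≤ b := le_max_right _ _
  have hba : b < a := max_lt (by linarith) ha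
  have hab2r : a - b ≤ 2 * r := by
    have : x - r ≤ b := le_max_left _ _
    linarith
  have habr : r ≤ a - b := by
    rcases le_total (x - r) 0 with h | h
    · rw [hb_def, max_eq_right h]; linarith
    · rw [hb_def, max_eq_left h]; linarith
  have hA : 0 < a ^ (β - 1) := Real.rpow_pos_of_pos ha _
  have haβ : a ^ β = a * a ^ (β - 1) := by
    rw [Real.rpow_sub_one (ne_of_gt ha)]
    field_simp
  -- b ^ β vs b * a ^ (β - 1)
  have hbb : ∀ h : 0 < b, b ^ β = b * b ^ (β - 1) := fun h => by
    rw [Real.rpow_sub_one (ne_of_gt h)]; field_simp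
  have hdivrw : a ^ β * (b / a) ^ β = b ^ β := by
    rw [Real.div_rpow hb0 ha.le]
    field_simp
  have hfrac0 : (-1 : ℝ) ≤ b / a - 1 := by
    have : 0 ≤ b / a := div_nonneg hb0 ha.le
    linarith
  have hfrac : b / a * a = b := div_mul_cancel₀ _ (ne_of_gt ha)
  rcases le_total 1 β with h1β | h1β
  · -- β ≥ 1
    rw [min_eq_left h1β, max_eq_right h1β]
    constructor
    · -- lower bound: b^β ≤ b * a^(β-1)
      have key : b ^ β ≤ b * a ^ (β - 1) := by
        rcases eq_or_lt_of_le hb0 with h | h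
        · rw [← h, Real.zero_rpow (ne_of_gt hβ), zero_mul]
        · rw [hbb h]
          have : b ^ (β - 1) ≤ a ^ (β - 1) :=
            Real.rpow_le_rpow hb0 hba.le (by linarith)
          nlinarith
      nlinarith
    · -- upper bound via Bernoulli
      have hber : 1 + β * (b / a - 1) ≤ (b / a) ^ β := by
        have := one_add_mul_self_le_rpow_one_add hfrac0 h1β
        simpa using this
      have f5 : a ^ β * (1 + β * (b / a - 1)) ≤ b ^ β := by
        calc a ^ β * (1 + β * (b / a - 1)) ≤ a ^ β * (b / a) ^ β :=
              mul_le_mul_of_nonneg_left hber (le_of_lt (Real.rpow_pos_of_pos ha _))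
          _ = b ^ β := hdivrw
      have f7 : a ^ β * (1 + β * (b / a - 1)) = a ^ β + β * (a ^ (β - 1) * b) - β * a ^ β := by
        rw [haβ]; field_simp; ring
      rw [f7] at f5
      nlinarith [mul_le_mul_of_nonneg_left hab2r (mul_nonneg hβ.le hA.le)]
  · -- β ≤ 1
    rw [min_eq_right h1β, max_eq_left h1β]
    constructor
    · -- lower bound via reverse Bernoulli
      have hber : (b / a) ^ β ≤ 1 + β * (b / a - 1) := by
        have := rpow_one_add_le_one_add_mul_self hfrac0 hβ.le h1β
        simpa using this
      have f5 : b ^ β ≤ a ^ β * (1 + β * (b / a - 1)) := by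
        calc b ^ β = a ^ β * (b / a) ^ β := hdivrw.symm
          _ ≤ a ^ β * (1 + β * (b / a - 1)) :=
              mul_le_mul_of_nonneg_left hber (le_of_lt (Real.rpow_pos_of_pos ha _))
      have f7 : a ^ β * (1 + β * (b / a - 1)) = a ^ β + β * (a ^ (β - 1) * b) - β * a ^ β := by
        rw [haβ]; field_simp; ring
      rw [f7] at f5
      nlinarith [mul_le_mul_of_nonneg_left habr (mul_nonneg hβ.le hA.le)]
    · -- upper bound: b * a^(β-1) ≤ b^β
      have key : b * a ^ (β - 1) ≤ b ^ β := by
        rcases eq_or_lt_of_le hb0 with h | h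
        · rw [← h, Real.zero_rpow (ne_of_gt hβ), zero_mul]
        · rw [hbb h]
          have : a ^ (β - 1) ≤ b ^ (β - 1) :=
            Real.rpow_le_rpow_of_nonpos h hba.le (by linarith)
          nlinarith
      nlinarith

/-- Exponent comparison. -/
lemma bessel_ratio (β γ x r : ℝ) (hβ : 0 < β) (hx : 0 < x) (hr : 0 < r) (hγ : 0 < γ) :
    γ * (x + γ * r) ^ (β - 1) ≤ (1 + γ) ^ (max 1 β) * (x + r) ^ (β - 1) := by
  have hA : (0:ℝ) < x + γ * r := by positivity
  have hB : (0:ℝ) < x + r := by positivity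
  have hγ1 : (0:ℝ) < 1 + γ := by linarith
  rcases le_total 1 β with h1β | h1β
  · rw [max_eq_right h1β]
    have h1 : x + γ * r ≤ (1 + γ) * (x + r) := by nlinarith
    have h2 : (x + γ * r) ^ (β - 1) ≤ ((1 + γ) * (x + r)) ^ (β - 1) :=
      Real.rpow_le_rpow hA.le h1 (by linarith)
    rw [Real.mul_rpow hγ1.le hB.le] at h2
    have h3 : (1 + γ) ^ β = (1 + γ) * (1 + γ) ^ (β - 1) := by
      rw [Real.rpow_sub_one (ne_of_gt hγ1)]; field_simp
    have hp1 : (0:ℝ) < (1 + γ) ^ (β - 1) := Real.rpow_pos_of_pos hγ1 _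
    have hp2 : (0:ℝ) < (x + r) ^ (β - 1) := Real.rpow_pos_of_pos hB _
    rw [h3]
    nlinarith [mul_le_mul_of_nonneg_left h2 hγ.le,
      mul_pos hp1 hp2]
  · rw [max_eq_left h1β, Real.rpow_one]
    set δ := 1 - β with hδ_def
    have hδ0 : 0 ≤ δ := by simp [hδ_def]; linarith
    have hδ1 : δ ≤ 1 := by simp [hδ_def]; linarith
    have hm1 : (1:ℝ) ≤ max 1 γ⁻¹ := le_max_left _ _
    have hBA : x + r ≤ max 1 γ⁻¹ * (x + γ * r) := by
      rcases le_total 1 γ with h | h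
      · rw [max_eq_left (by rw [← one_div]; exact (div_le_one hγ).2 h)]
        nlinarith
      · rw [max_eq_right (by rw [← one_div]; exact (one_le_div hγ).2 h)]
        have h1 : γ⁻¹ * γ = 1 := inv_mul_cancel₀ (ne_of_gt hγ)
        have hγinv : 1 ≤ γ⁻¹ := by rw [← one_div]; exact (one_le_div hγ).2 h
        nlinarith
    have hBδ : (x + r) ^ δ ≤ (max 1 γ⁻¹) ^ δ * (x + γ * r) ^ δ := by
      calc (x + r) ^ δ ≤ (max 1 γ⁻¹ * (x + γ * r)) ^ δ :=
            Real.rpow_le_rpow hB.le hBA hδ0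
        _ = (max 1 γ⁻¹) ^ δ * (x + γ * r) ^ δ :=
            Real.mul_rpow (by linarith) hA.le
    have hmδ : (max 1 γ⁻¹) ^ δ ≤ max 1 γ⁻¹ := by
      calc (max 1 γ⁻¹) ^ δ ≤ (max 1 γ⁻¹) ^ (1:ℝ) :=
            Real.rpow_le_rpow_of_exponent_le hm1 hδ1
        _ = max 1 γ⁻¹ := Real.rpow_one _
    have hγm : γ * max 1 γ⁻¹ ≤ 1 + γ := by
      rcases le_total 1 γ⁻¹ with h | h
      · rw [max_eq_right h]
        rw [mul_inv_cancel₀ (ne_of_gt hγ)]; linarith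
      · rw [max_eq_left h]; linarith
    -- convert to division form
    have hkey : γ * (x + r) ^ δ ≤ (1 + γ) * (x + γ * r) ^ δ := by
      have hAδ : (0:ℝ) < (x + γ * r) ^ δ := Real.rpow_pos_of_pos hA _
      calc γ * (x + r) ^ δ ≤ γ * ((max 1 γ⁻¹) ^ δ * (x + γ * r) ^ δ) :=
            mul_le_mul_of_nonneg_left hBδ hγ.le
        _ ≤ γ * (max 1 γ⁻¹ * (x + γ * r) ^ δ) := by
            have := mul_le_mul_of_nonneg_right hmδ hAδ.le
            nlinarith
        _ = (γ * max 1 γ⁻¹) * (x + γ * r) ^ δ := by ring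
        _ ≤ (1 + γ) * (x + γ * r) ^ δ :=
            mul_le_mul_of_nonneg_right hγm hAδ.le
    have hArw : (x + γ * r) ^ (β - 1) = ((x + γ * r) ^ δ)⁻¹ := by
      rw [show β - 1 = -δ by rw [hδ_def]; ring, Real.rpow_neg hA.le]
    have hBrw : (x + r) ^ (β - 1) = ((x + r) ^ δ)⁻¹ := by
      rw [show β - 1 = -δ by rw [hδ_def]; ring, Real.rpow_neg hB.le]
    rw [hArw, hBrw]
    have hAδ : (0:ℝ) < (x + γ * r) ^ δ := Real.rpow_pos_of_pos hA _
    have hBδ' : (0:ℝ) < (x + r) ^ δ := Real.rpow_pos_of_pos hB _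
    rw [← div_eq_mul_inv, ← div_eq_mul_inv, div_le_div_iff₀ hAδ hBδ']
    nlinarith [hkey]

lemma bessel_ball_measure (α : ℝ) (hα : -1 < α) (x r : ℝ) (hx : 0 < x) (hr : 0 < r) :
    ((MeasureTheory.volume.restrict (Set.Ioi (0:ℝ))).withDensity
        (fun y => ENNReal.ofReal (y ^ α))) {y | |x - y| < r}
      = ENNReal.ofReal (((x + r) ^ (α + 1) - (max (x - r) 0) ^ (α + 1)) / (α + 1)) := by
  have hset : {y : ℝ | |x - y| < r} = Set.Ioo (x - r) (x + r) := by
    ext y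
    simp only [Set.mem_setOf_eq, Set.mem_Ioo, abs_lt]
    constructor
    · rintro ⟨h1, h2⟩; constructor <;> linarith
    · rintro ⟨h1, h2⟩; constructor <;> linarith
  have hb : (0:ℝ) < x + r := by positivity
  have hab : max (x - r) 0 < x + r := max_lt (by linarith) hb
  rw [hset, withDensity_apply _ measurableSet_Ioo,
    Measure.restrict_restrict measurableSet_Ioo, Set.Ioo_inter_Ioi]
  set a := max (x - r) 0 with ha_def
  have ha0 : 0 ≤ a := le_max_right _ _
  rw [setLIntegral_congr (MeasureTheory.Ioo_ae_eq_Ioc (a := a) (b := x + r))]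
  have hint : IntegrableOn (fun y : ℝ => y ^ α) (Set.Ioc a (x + r)) volume :=
    (intervalIntegral.intervalIntegrable_rpow' hα).1
  have hnn : 0 ≤ᵐ[volume.restrict (Set.Ioc a (x + r))] fun y : ℝ => y ^ α := by
    filter_upwards [ae_restrict_mem measurableSet_Ioc] with y hy
    exact Real.rpow_nonneg (le_trans ha0 hy.1.le) _
  rw [← MeasureTheory.ofReal_integral_eq_lintegral_ofReal hint hnn]
  congr 1
  rw [← intervalIntegral.integral_of_le hab.le]
  rw [integral_rpow (Or.inl hα)]

theorem bessel_measure_doubling (α : ℝ) (hα : -1 < α) :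
    ∃ C : ℝ, 0 < C ∧
      ∀ x r γ : ℝ, 0 < x → 0 < r → 0 < γ →
        ((MeasureTheory.volume.restrict (Set.Ioi (0:ℝ))).withDensity
            (fun y => ENNReal.ofReal (y ^ α))) {y | |x - y| < γ * r}
          ≤ ENNReal.ofReal (C * (1 + γ) ^ (max 1 (α + 1))) *
            ((MeasureTheory.volume.restrict (Set.Ioi (0:ℝ))).withDensity
              (fun y => ENNReal.ofReal (y ^ α))) {y | |x - y| < r} := by
  have hβ : 0 < α + 1 := by linarith
  have hm : (0:ℝ) < min 1 (α + 1) := lt_min one_pos hβ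
  have hM : (0:ℝ) < max 1 (α + 1) := lt_of_lt_of_le one_pos (le_max_left _ _)
  refine ⟨2 * max 1 (α + 1) / min 1 (α + 1), by positivity, ?_⟩
  intro x r γ hx hr hγ
  have hγr : 0 < γ * r := mul_pos hγ hr
  rw [bessel_ball_measure α hα x (γ * r) hx hγr, bessel_ball_measure α hα x r hx hr]
  have hγ1 : (0:ℝ) < 1 + γ := by linarith
  have hCnn : (0:ℝ) ≤ 2 * max 1 (α + 1) / min 1 (α + 1) * (1 + γ) ^ (max 1 (α + 1)) := by
    positivity
  rw [← ENNReal.ofReal_mul hCnn]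
  apply ENNReal.ofReal_le_ofReal
  have hupper := (bessel_G_bounds (α + 1) x (γ * r) hβ hx hγr).2
  have hlower := (bessel_G_bounds (α + 1) x r hβ hx hr).1
  have hratio := bessel_ratio (α + 1) γ x r hβ hx hr hγ
  have hmain : (x + γ * r) ^ (α + 1) - (max (x - γ * r) 0) ^ (α + 1)
      ≤ 2 * max 1 (α + 1) / min 1 (α + 1) * (1 + γ) ^ (max 1 (α + 1)) *
        ((x + r) ^ (α + 1) - (max (x - r) 0) ^ (α + 1)) := by
    calc (x + γ * r) ^ (α + 1) - (max (x - γ * r) 0) ^ (α + 1)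
        ≤ 2 * max 1 (α + 1) * (γ * r * (x + γ * r) ^ (α + 1 - 1)) := hupper
      _ = (2 * max 1 (α + 1) * r) * (γ * (x + γ * r) ^ (α + 1 - 1)) := by ring
      _ ≤ (2 * max 1 (α + 1) * r) *
            ((1 + γ) ^ (max 1 (α + 1)) * (x + r) ^ (α + 1 - 1)) := by
          apply mul_le_mul_of_nonneg_left hratio
          positivity
      _ = 2 * max 1 (α + 1) / min 1 (α + 1) * (1 + γ) ^ (max 1 (α + 1)) *
            (min 1 (α + 1) * (r * (x + r) ^ (α + 1 - 1))) := by
          field_simp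
      _ ≤ 2 * max 1 (α + 1) / min 1 (α + 1) * (1 + γ) ^ (max 1 (α + 1)) *
            ((x + r) ^ (α + 1) - (max (x - r) 0) ^ (α + 1)) := by
          apply mul_le_mul_of_nonneg_left hlower
          positivity
  calc ((x + γ * r) ^ (α + 1) - (max (x - γ * r) 0) ^ (α + 1)) / (α + 1)
      ≤ (2 * max 1 (α + 1) / min 1 (α + 1) * (1 + γ) ^ (max 1 (α + 1)) *
          ((x + r) ^ (α + 1) - (max (x - r) 0) ^ (α + 1))) / (α + 1) := by
        exact div_le_div_of_nonneg_right hmain hβ.le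
    _ = 2 * max 1 (α + 1) / min 1 (α + 1) * (1 + γ) ^ (max 1 (α + 1)) *
          (((x + r) ^ (α + 1) - (max (x - r) 0) ^ (α + 1)) / (α + 1)) := by ring
end

section
/- Let α > -1 and ν be the measure x^α dx on (0,∞). Then there exist constants c, C > 0 such that for all y > 0 and R > 0: c ≤ ν(B(y, R^{-1/2})) · R^{(α+1)/2} · (1 + √R·y)^{-α} ≤ C, where B(y,r) = (max(y-r,0), y+r). -/
open Real MeasureTheory

private lemma rpow_integrableOn (α : ℝ) (hα : -1 < α) (a b : ℝ) :
    IntegrableOn (fun x : ℝ => x ^ α) (Set.Ioo a b) volume :=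
  (intervalIntegral.intervalIntegrable_rpow' hα).1.mono_set Set.Ioo_subset_Ioc_self

private lemma rpow_ae_nonneg (α a b : ℝ) (ha : 0 ≤ a) :
    0 ≤ᶠ[ae (volume.restrict (Set.Ioo a b))] (fun x : ℝ => x ^ α) := by
  rw [Filter.EventuallyLE, ae_restrict_iff' measurableSet_Ioo]
  filter_upwards with x hx
  exact Real.rpow_nonneg (le_of_lt (lt_of_le_of_lt ha hx.1)) α

private lemma integral_Ioo_const (a b c : ℝ) (hab : a ≤ b) :
    ∫ _ in Set.Ioo a b, c = (b - a) * c := by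
  rw [setIntegral_const, measureReal_def, Real.volume_Ioo, ENNReal.toReal_ofReal (by linarith), smul_eq_mul]

private lemma integral_Ioo_rpow (α : ℝ) (hα : -1 < α) (b : ℝ) (hb : 0 ≤ b) :
    ∫ x in Set.Ioo (0:ℝ) b, x ^ α = b ^ (α + 1) / (α + 1) := by
  rw [← integral_Ioc_eq_integral_Ioo, ← intervalIntegral.integral_of_le hb,
    integral_rpow (Or.inl hα), Real.zero_rpow (by linarith)]
  ring

/-- The measure value as a set integral. -/
private lemma meas_toReal (α : ℝ) (hα : -1 < α) (a b : ℝ) (hb : 0 < b) :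
    (((MeasureTheory.volume.restrict (Set.Ioi (0:ℝ))).withDensity
        (fun x => ENNReal.ofReal (x ^ α))) (Set.Ioo a b)).toReal
      = ∫ x in Set.Ioo (max a 0) b, x ^ α := by
  have hset : Set.Ioo a b ∩ Set.Ioi (0:ℝ) = Set.Ioo (max a 0) b := by
    ext x
    simp only [Set.mem_inter_iff, Set.mem_Ioo, Set.mem_Ioi, max_lt_iff]
    tauto
  rw [withDensity_apply _ measurableSet_Ioo, Measure.restrict_restrict measurableSet_Ioo, hset]
  rw [← ofReal_integral_eq_lintegral_ofReal (rpow_integrableOn α hα _ _)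
    (rpow_ae_nonneg α _ _ (le_max_right a 0))]
  exact ENNReal.toReal_ofReal (setIntegral_nonneg measurableSet_Ioo
    (fun x hx => Real.rpow_nonneg (le_of_lt (lt_of_le_of_lt (le_max_right a 0) hx.1)) α))

/-- Core two-sided bound. -/
private lemma core_bounds (α : ℝ) (hα : -1 < α) : ∃ c C : ℝ, 0 < c ∧ 0 < C ∧
    ∀ y r : ℝ, 0 < y → 0 < r →
      c ≤ (∫ x in Set.Ioo (max (y - r) 0) (y + r), x ^ α) / (r * (y + r) ^ α) ∧
      (∫ x in Set.Ioo (max (y - r) 0) (y + r), x ^ α) / (r * (y + r) ^ α) ≤ C := by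
  rcases le_or_gt 0 α with hα0 | hα0
  · -- α ≥ 0 : constants 2^(-(α+1)) and 2
    refine ⟨(2:ℝ) ^ (-(α+1)), 2, Real.rpow_pos_of_pos (by norm_num) _, by norm_num, ?_⟩
    intro y r hy hr
    set m := max (y - r) 0 with hm
    set b := y + r with hbdef
    have hb : 0 < b := by positivity
    have hm0 : 0 ≤ m := le_max_right _ _
    have hmb : m ≤ b := max_le (by linarith) hb.le
    have hbm : b - m ≤ 2 * r := by
      have : y - r ≤ m := le_max_left _ _
      linarith
    have hbα : 0 < b ^ α := Real.rpow_pos_of_pos hb α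
    have hrb : 0 < r * b ^ α := by positivity
    have hb2α : (b / 2) ^ α = b ^ α * (2:ℝ) ^ (-α) := by
      rw [div_eq_mul_inv, Real.mul_rpow hb.le (by norm_num), Real.inv_rpow (by norm_num),
        ← Real.rpow_neg (by norm_num)]
    have h2pos : (0:ℝ) < (2:ℝ) ^ (-α) := Real.rpow_pos_of_pos (by norm_num) _
    constructor
    · -- lower bound
      rw [le_div_iff₀ hrb]
      have hkey : r * b ^ α * (2:ℝ) ^ (-α) / 2 ≤ ∫ x in Set.Ioo m b, x ^ α := by
        rcases le_or_gt y (3 * r) with hy3 | hy3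
        · -- m ≤ b/2, integrate over (b/2, b)
          have hmb2 : m ≤ b / 2 := max_le (by linarith) (by linarith)
          have hsub : (∫ x in Set.Ioo (b/2) b, x ^ α) ≤ ∫ x in Set.Ioo m b, x ^ α :=
            setIntegral_mono_set (rpow_integrableOn α hα _ _) (rpow_ae_nonneg α _ _ hm0)
              ((Set.Ioo_subset_Ioo hmb2 le_rfl).eventuallyLE)
          have hconst : (∫ _ in Set.Ioo (b/2) b, (b/2) ^ α) ≤ ∫ x in Set.Ioo (b/2) b, x ^ α := by
            refine setIntegral_mono_on ((integrableOn_const_iff).2 (Or.inr ?_))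
              (rpow_integrableOn α hα _ _) measurableSet_Ioo ?_
            · rw [Real.volume_Ioo]; exact ENNReal.ofReal_lt_top
            · intro x hx
              exact Real.rpow_le_rpow (by linarith [hx.1]) hx.1.le hα0
          rw [integral_Ioo_const _ _ _ (by linarith)] at hconst
          have : r * b ^ α * (2:ℝ) ^ (-α) / 2 ≤ (b - b/2) * (b/2) ^ α := by
            rw [hb2α]
            have hrle : r ≤ b := by linarith
            nlinarith [mul_le_mul_of_nonneg_right hrle (mul_pos hbα h2pos).le]
          linarith
        · -- y > 3r : m = y - r ≥ b/2
          have hmeq : m = y - r := max_eq_left (by linarith)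
          have hm2 : b / 2 ≤ m := by rw [hmeq]; linarith
          have hconst : (∫ _ in Set.Ioo m b, (b/2) ^ α) ≤ ∫ x in Set.Ioo m b, x ^ α := by
            refine setIntegral_mono_on ((integrableOn_const_iff).2 (Or.inr ?_))
              (rpow_integrableOn α hα _ _) measurableSet_Ioo ?_
            · rw [Real.volume_Ioo]; exact ENNReal.ofReal_lt_top
            · intro x hx
              exact Real.rpow_le_rpow (by linarith [hx.1]) (le_trans hm2 hx.1.le) hα0
          rw [integral_Ioo_const _ _ _ hmb] at hconst
          have hbm2 : (2:ℝ) * r = b - m := by rw [hmeq]; ring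
          have : r * b ^ α * (2:ℝ) ^ (-α) / 2 ≤ (b - m) * (b/2) ^ α := by
            rw [hb2α, ← hbm2]
            nlinarith [mul_pos hbα h2pos, hr.le]
          linarith
      calc (2:ℝ) ^ (-(α+1)) * (r * b ^ α)
          = r * b ^ α * (2:ℝ) ^ (-α) / 2 := by
            rw [show -(α+1) = -α + (-1) by ring, Real.rpow_add (by norm_num),
              Real.rpow_neg_one]
            ring
        _ ≤ _ := hkey
    · -- upper bound
      rw [div_le_iff₀ hrb]
      have hconst : (∫ x in Set.Ioo m b, x ^ α) ≤ ∫ _ in Set.Ioo m b, b ^ α := by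
        refine setIntegral_mono_on (rpow_integrableOn α hα _ _)
          ((integrableOn_const_iff).2 (Or.inr ?_)) measurableSet_Ioo ?_
        · rw [Real.volume_Ioo]; exact ENNReal.ofReal_lt_top
        · intro x hx
          exact Real.rpow_le_rpow (le_trans hm0 hx.1.le) hx.2.le hα0
      rw [integral_Ioo_const _ _ _ hmb] at hconst
      nlinarith [hbα.le]
  · -- -1 < α < 0 : constants 1 and max (3/(α+1)) (2 * 3^(-α))
    refine ⟨1, max (3/(α+1)) (2 * (3:ℝ) ^ (-α)), one_pos,
      lt_max_of_lt_left (div_pos (by norm_num) (by linarith)), ?_⟩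
    intro y r hy hr
    set m := max (y - r) 0 with hm
    set b := y + r with hbdef
    have hb : 0 < b := by positivity
    have hm0 : 0 ≤ m := le_max_right _ _
    have hmb : m ≤ b := max_le (by linarith) hb.le
    have hbα : 0 < b ^ α := Real.rpow_pos_of_pos hb α
    have hrb : 0 < r * b ^ α := by positivity
    have hmy : m ≤ y := max_le (by linarith) hy.le
    constructor
    · -- lower bound : x^α ≥ b^α on (m,b), length ≥ r
      rw [le_div_iff₀ hrb, one_mul]
      have hconst : (∫ _ in Set.Ioo m b, b ^ α) ≤ ∫ x in Set.Ioo m b, x ^ α := by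
        refine setIntegral_mono_on ((integrableOn_const_iff).2 (Or.inr ?_))
          (rpow_integrableOn α hα _ _) measurableSet_Ioo ?_
        · rw [Real.volume_Ioo]; exact ENNReal.ofReal_lt_top
        · intro x hx
          exact Real.rpow_le_rpow_of_nonpos (lt_of_le_of_lt hm0 hx.1) hx.2.le hα0.le
      rw [integral_Ioo_const _ _ _ hmb] at hconst
      nlinarith [hbα.le]
    · -- upper bound
      rw [div_le_iff₀ hrb]
      rcases le_or_gt y (2 * r) with hy2 | hy2
      · -- extend integral down to 0
        have hsub : (∫ x in Set.Ioo m b, x ^ α) ≤ ∫ x in Set.Ioo (0:ℝ) b, x ^ α :=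
          setIntegral_mono_set (rpow_integrableOn α hα _ _)
            (rpow_ae_nonneg α _ _ le_rfl)
            ((Set.Ioo_subset_Ioo hm0 le_rfl).eventuallyLE)
        rw [integral_Ioo_rpow α hα b hb.le] at hsub
        have hbsplit : b ^ (α + 1) = b * b ^ α := by
          rw [Real.rpow_add hb, Real.rpow_one]; ring
        have hα1 : 0 < α + 1 := by linarith
        have hb3 : b ≤ 3 * r := by linarith
        have h1 : b ^ (α + 1) / (α + 1) ≤ 3 / (α + 1) * (r * b ^ α) := by
          rw [hbsplit, show 3 / (α + 1) * (r * b ^ α) = 3 * (r * b ^ α) / (α + 1) by ring]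
          gcongr (?_ / (α+1))
          nlinarith [hbα.le]
        have h2 : (3 / (α + 1)) ≤ max (3/(α+1)) (2 * (3:ℝ) ^ (-α)) := le_max_left _ _
        calc (∫ x in Set.Ioo m b, x ^ α) ≤ 3 / (α + 1) * (r * b ^ α) := le_trans hsub h1
          _ ≤ max (3/(α+1)) (2 * (3:ℝ) ^ (-α)) * (r * b ^ α) :=
            mul_le_mul_of_nonneg_right h2 hrb.le
      · -- y > 2r : m ≥ b/3
        have hmeq : m = y - r := max_eq_left (by linarith)
        have hm3 : b / 3 ≤ m := by rw [hmeq]; linarith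
        have hb3 : (0:ℝ) < b / 3 := by linarith
        have hconst : (∫ x in Set.Ioo m b, x ^ α) ≤ ∫ _ in Set.Ioo m b, (b/3) ^ α := by
          refine setIntegral_mono_on (rpow_integrableOn α hα _ _)
            ((integrableOn_const_iff).2 (Or.inr ?_)) measurableSet_Ioo ?_
          · rw [Real.volume_Ioo]; exact ENNReal.ofReal_lt_top
          · intro x hx
            exact Real.rpow_le_rpow_of_nonpos hb3 (le_trans hm3 hx.1.le) hα0.le
        rw [integral_Ioo_const _ _ _ hmb] at hconst
        have hb3α : (b / 3) ^ α = b ^ α * (3:ℝ) ^ (-α) := by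
          rw [div_eq_mul_inv, Real.mul_rpow hb.le (by norm_num), Real.inv_rpow (by norm_num),
            ← Real.rpow_neg (by norm_num)]
        have h3pos : (0:ℝ) < (3:ℝ) ^ (-α) := Real.rpow_pos_of_pos (by norm_num) _
        have hbm : b - m = 2 * r := by rw [hmeq]; ring
        have h1 : (b - m) * (b/3) ^ α ≤ 2 * (3:ℝ) ^ (-α) * (r * b ^ α) := by
          rw [hbm, hb3α]; ring_nf; nlinarith [hbα.le, h3pos.le]
        have h2 : (2 * (3:ℝ) ^ (-α)) ≤ max (3/(α+1)) (2 * (3:ℝ) ^ (-α)) := le_max_right _ _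
        calc (∫ x in Set.Ioo m b, x ^ α) ≤ (b - m) * (b/3) ^ α := hconst
          _ ≤ 2 * (3:ℝ) ^ (-α) * (r * b ^ α) := h1
          _ ≤ max (3/(α+1)) (2 * (3:ℝ) ^ (-α)) * (r * b ^ α) :=
            mul_le_mul_of_nonneg_right h2 hrb.le

theorem bessel_measure_ball_asymptotics (α : ℝ) (hα : -1 < α) :
    ∃ c C : ℝ, 0 < c ∧ 0 < C ∧
      ∀ y R : ℝ, 0 < y → 0 < R →
        c ≤ (((MeasureTheory.volume.restrict (Set.Ioi (0:ℝ))).withDensity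
              (fun x => ENNReal.ofReal (x ^ α)))
                (Set.Ioo (y - R ^ (-(1:ℝ)/2)) (y + R ^ (-(1:ℝ)/2)))).toReal *
            R ^ ((α + 1) / 2) * (1 + Real.sqrt R * y) ^ (-α) ∧
        (((MeasureTheory.volume.restrict (Set.Ioi (0:ℝ))).withDensity
              (fun x => ENNReal.ofReal (x ^ α)))
                (Set.Ioo (y - R ^ (-(1:ℝ)/2)) (y + R ^ (-(1:ℝ)/2)))).toReal *
            R ^ ((α + 1) / 2) * (1 + Real.sqrt R * y) ^ (-α) ≤ C := by
  obtain ⟨c, C, hc, hC, hbound⟩ := core_bounds α hα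
  refine ⟨c, C, hc, hC, ?_⟩
  intro y R hy hR
  set r := R ^ (-(1:ℝ)/2) with hrdef
  have hr : 0 < r := Real.rpow_pos_of_pos hR _
  have hb : 0 < y + r := by positivity
  have hsqrt : Real.sqrt R = r⁻¹ := by
    rw [Real.sqrt_eq_rpow, hrdef, ← Real.rpow_neg hR.le]
    norm_num
  have hR2 : R ^ ((α + 1) / 2) = r ^ (-(α+1)) := by
    rw [hrdef, ← Real.rpow_mul hR.le]
    ring_nf
  have hone : 1 + Real.sqrt R * y = (y + r) / r := by
    rw [hsqrt]; field_simp; ring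
  have heq : (((MeasureTheory.volume.restrict (Set.Ioi (0:ℝ))).withDensity
        (fun x => ENNReal.ofReal (x ^ α))) (Set.Ioo (y - r) (y + r))).toReal *
      R ^ ((α + 1) / 2) * (1 + Real.sqrt R * y) ^ (-α)
      = (∫ x in Set.Ioo (max (y - r) 0) (y + r), x ^ α) / (r * (y + r) ^ α) := by
    rw [meas_toReal α hα _ _ hb, hR2, hone]
    have h3 : ((y+r)/r) ^ (-α) = r ^ α / (y+r) ^ α := by
      rw [Real.rpow_neg (by positivity), Real.div_rpow hb.le hr.le, inv_div]
    have h4 : r ^ (-(α+1)) = (r ^ α * r)⁻¹ := by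
      rw [Real.rpow_neg hr.le, Real.rpow_add hr, Real.rpow_one]
    rw [h3, h4]
    have h5 : (y+r) ^ α ≠ 0 := (Real.rpow_pos_of_pos hb α).ne'
    have h6 : r ^ α ≠ 0 := (Real.rpow_pos_of_pos hr α).ne'
    field_simp
  rw [heq]
  exact hbound y r hy hr
end
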